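/- Let X and u be as in the standing construction, let δ ∈ (0, 1/8], and take the harmonic mesh d_n := δ/n with partial sums t_n and x_n := ρ_n u(t_n). Then ρ_∞ = exp(−δ^2 π^2/6) > 0, and the Cesàro means y_n := (1/n) ∑_{k=1}^n x_k satisfy: y_n converges weakly to 0 (i.e., ⟨y_n, z⟩ → 0 for every z ∈ X), yet inf_{n ≥ 1} ‖y_n‖ ≥ (1/2) · exp(−(δ^2/6)(π^2 + 3)) > 0; in particular the Cesàro means do not converge strongly to 0. -/

import Mathlib

open Filter Real
open scoped RealInnerProductSpace

/-- Telescoping log bound for harmonic tail sums. -/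
private lemma sum_inv_le_log_two {k n : ℕ} (hk : 1 ≤ k) (hn : n ≤ 2 * k - 1) :
    ∑ j ∈ Finset.Ico k n, (1 : ℝ) / j ≤ Real.log 2 := by
  rcases le_or_gt n k with h | h
  · rw [Finset.Ico_eq_empty (by omega)]
    simpa using Real.log_nonneg one_le_two
  have hk2 : 2 ≤ k := by omega
  have step : ∀ j ∈ Finset.Ico k n, (1 : ℝ) / j ≤
      Real.log j - Real.log ((j - 1 : ℕ) : ℝ) := by
    intro j hj
    simp only [Finset.mem_Ico] at hj
    have hj2 : 2 ≤ j := le_trans hk2 hj.1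
    have hj1 : (1 : ℝ) ≤ ((j - 1 : ℕ) : ℝ) := by
      exact_mod_cast Nat.one_le_iff_ne_zero.2 (by omega)
    have hjpos : (0 : ℝ) < ((j - 1 : ℕ) : ℝ) := lt_of_lt_of_le one_pos hj1
    have hjr : ((j - 1 : ℕ) : ℝ) = (j : ℝ) - 1 := by
      push_cast [Nat.cast_sub (by omega : 1 ≤ j)]; ring
    have hx : (0 : ℝ) < 1 - 1 / j := by
      rw [sub_pos, div_lt_one (by positivity)]
      exact_mod_cast hj2.trans_lt' one_lt_two
    have hlog : Real.log (1 - 1 / j) ≤ -(1 / j) := by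
      have := Real.log_le_sub_one_of_pos hx
      linarith
    have heq : Real.log (1 - 1 / j) =
        Real.log ((j - 1 : ℕ) : ℝ) - Real.log j := by
      rw [hjr, ← Real.log_div (by linarith) (by positivity)]
      congr 1
      field_simp
    linarith [heq ▸ hlog]
  calc ∑ j ∈ Finset.Ico k n, (1 : ℝ) / j
      ≤ ∑ j ∈ Finset.Ico k n, (Real.log j - Real.log ((j - 1 : ℕ) : ℝ)) :=
        Finset.sum_le_sum step
    _ = Real.log ((n - 1 : ℕ) : ℝ) - Real.log ((k - 1 : ℕ) : ℝ) := by
        rw [Finset.sum_Ico_eq_sum_range]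
        have : ∀ i, Real.log ((k + i : ℕ) : ℝ) - Real.log ((k + i - 1 : ℕ) : ℝ)
            = (fun i => Real.log ((k - 1 + i : ℕ) : ℝ)) (i + 1)
              - (fun i => Real.log ((k - 1 + i : ℕ) : ℝ)) i := by
          intro i
          simp only
          congr 3 <;> omega
        calc ∑ i ∈ Finset.range (n - k),
              (Real.log ((k + i : ℕ) : ℝ) - Real.log ((k + i - 1 : ℕ) : ℝ))
            = ∑ i ∈ Finset.range (n - k),
              ((fun i => Real.log ((k - 1 + i : ℕ) : ℝ)) (i + 1)
                - (fun i => Real.log ((k - 1 + i : ℕ) : ℝ)) i) := by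
              refine Finset.sum_congr rfl fun i _ => this i
          _ = Real.log ((k - 1 + (n - k) : ℕ) : ℝ) - Real.log ((k - 1 + 0 : ℕ) : ℝ) := by
              exact Finset.sum_range_sub (fun i => Real.log ((k - 1 + i : ℕ) : ℝ)) _
          _ = Real.log ((n - 1 : ℕ) : ℝ) - Real.log ((k - 1 : ℕ) : ℝ) := by
              congr 3 <;> omega
    _ ≤ Real.log 2 := by
        have hk1 : (1 : ℝ) ≤ ((k - 1 : ℕ) : ℝ) := by
          exact_mod_cast Nat.one_le_iff_ne_zero.2 (by omega)
        have hkpos : (0 : ℝ) < ((k - 1 : ℕ) : ℝ) := lt_of_lt_of_le one_pos hk1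
        have hle : ((n - 1 : ℕ) : ℝ) ≤ 2 * ((k - 1 : ℕ) : ℝ) := by
          have : (n - 1 : ℕ) ≤ 2 * (k - 1) := by omega
          exact_mod_cast this
        have hn1 : (1 : ℝ) ≤ ((n - 1 : ℕ) : ℝ) := by
          exact_mod_cast Nat.one_le_iff_ne_zero.2 (by omega)
        have h1 : Real.log ((n - 1 : ℕ) : ℝ) ≤ Real.log (2 * ((k - 1 : ℕ) : ℝ)) :=
          Real.log_le_log (by linarith) hle
        rw [Real.log_mul two_ne_zero (ne_of_gt hkpos)] at h1
        linarith

/-- Harmonic mesh `d n = δ/n` with `δ ∈ (0,1/8]`: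
`ρ_∞ = exp (-δ²π²/6) > 0`, and the Cesàro means
`y n = (1/n) ∑_{k=1}^n x k` converge weakly to `0` yet satisfy
`‖y n‖ ≥ (1/2) exp (-(δ²/6)(π² + 3)) > 0` for all `n ≥ 1`. -/
theorem harmonic_cesaro_not_strong
    {X : Type*} [NormedAddCommGroup X] [InnerProductSpace ℝ X] [CompleteSpace X]
    (u : ℝ → X)
    (hu : ∀ s : ℝ, 0 ≤ s → ∀ t : ℝ, 0 ≤ t → ⟪u s, u t⟫ = Real.exp (-(s - t) ^ 2))
    (δ : ℝ) (hδ0 : 0 < δ) (hδ1 : δ ≤ 1 / 8)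
    (d : ℕ → ℝ) (hd : ∀ n : ℕ, d n = δ / n)
    (t : ℕ → ℝ) (ht : ∀ n, t n = ∑ k ∈ Finset.Ico 1 n, d k)
    (ρ : ℕ → ℝ) (hρ : ∀ n, ρ n = Real.exp (-(∑ k ∈ Finset.Ico 1 n, d k ^ 2)))
    (x : ℕ → X) (hx : ∀ n, x n = ρ n • u (t n))
    (y : ℕ → X) (hy : ∀ n, y n = (1 / (n : ℝ)) • ∑ k ∈ Finset.Icc 1 n, x k) :
    Real.exp (-∑' k : ℕ, d (k + 1) ^ 2) = Real.exp (-(δ ^ 2 * π ^ 2 / 6)) ∧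
    0 < Real.exp (-(δ ^ 2 * π ^ 2 / 6)) ∧
    (∀ z : X, Tendsto (fun n : ℕ => ⟪y n, z⟫) atTop (nhds 0)) ∧
    (∀ n : ℕ, 1 ≤ n →
      1 / 2 * Real.exp (-(δ ^ 2 / 6 * (π ^ 2 + 3))) ≤ ‖y n‖) ∧
    0 < 1 / 2 * Real.exp (-(δ ^ 2 / 6 * (π ^ 2 + 3))) := by
  -- basic facts
  have hd0 : ∀ n, 0 ≤ d n := fun n => by rw [hd]; positivity
  have hsq : HasSum (fun k : ℕ => d k ^ 2) (δ ^ 2 * (π ^ 2 / 6)) := by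
    have := (hasSum_zeta_two).mul_left (δ ^ 2)
    have h : (fun k : ℕ => d k ^ 2) = fun i : ℕ => δ ^ 2 * (1 / (i : ℝ) ^ 2) := by
      funext k
      rw [hd, div_pow, mul_one_div]
    rw [h]; exact this
  have hpartial : ∀ n, ∑ k ∈ Finset.Ico 1 n, d k ^ 2 ≤ δ ^ 2 * π ^ 2 / 6 := by
    intro n
    have := Summable.sum_le_tsum (Finset.Ico 1 n) (fun k _ => sq_nonneg (d k)) hsq.summable
    rw [hsq.tsum_eq] at this
    linarith
  have hρ_le_one : ∀ n, ρ n ≤ 1 := by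
    intro n
    rw [hρ]
    exact Real.exp_le_one_iff.2 (neg_nonpos.2 (Finset.sum_nonneg fun k _ => sq_nonneg _))
  have hρ_pos : ∀ n, 0 < ρ n := fun n => by rw [hρ]; exact Real.exp_pos _
  have hρ_ge : ∀ n, Real.exp (-(δ ^ 2 * π ^ 2 / 6)) ≤ ρ n := by
    intro n
    rw [hρ]
    exact Real.exp_le_exp.2 (neg_le_neg (hpartial n))
  have ht0 : ∀ n, 0 ≤ t n := fun n => by
    rw [ht]; exact Finset.sum_nonneg fun k _ => hd0 k
  have hmono : ∀ {m n : ℕ}, m ≤ n → t m ≤ t n := by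
    intro m n hmn
    rw [ht, ht]
    exact Finset.sum_le_sum_of_subset_of_nonneg
      (Finset.Ico_subset_Ico le_rfl hmn) fun k _ _ => hd0 k
  have hnormu : ∀ s : ℝ, 0 ≤ s → ‖u s‖ = 1 := by
    intro s hs
    have h2 : ‖u s‖ ^ 2 = 1 := by
      rw [← real_inner_self_eq_norm_sq, hu s hs s hs]
      simp
    have h3 : (‖u s‖ - 1) * (‖u s‖ + 1) = 0 := by nlinarith
    rcases mul_eq_zero.1 h3 with h | h
    · linarith
    · linarith [norm_nonneg (u s)]
  have hnormx : ∀ k, ‖x k‖ = ρ k := by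
    intro k
    rw [hx, norm_smul, hnormu (t k) (ht0 k), Real.norm_eq_abs,
      abs_of_pos (hρ_pos k), mul_one]
  have hynorm : ∀ n, ‖y n‖ ≤ 1 := by
    intro n
    rcases Nat.eq_zero_or_pos n with rfl | hn
    · simp [hy]
    rw [hy, norm_smul]
    have h1 : ‖∑ k ∈ Finset.Icc 1 n, x k‖ ≤ (n : ℝ) := by
      refine (norm_sum_le _ _).trans ?_
      calc ∑ k ∈ Finset.Icc 1 n, ‖x k‖ ≤ ∑ k ∈ Finset.Icc 1 n, 1 :=
            Finset.sum_le_sum fun k _ => (hnormx k) ▸ hρ_le_one k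
        _ = (n : ℝ) := by simp
    have hn' : (0 : ℝ) < n := by exact_mod_cast hn
    calc ‖(1 / (n : ℝ))‖ * ‖∑ k ∈ Finset.Icc 1 n, x k‖
        ≤ (1 / (n : ℝ)) * n := by
          rw [Real.norm_eq_abs, abs_of_pos (by positivity)]
          exact mul_le_mul_of_nonneg_left h1 (by positivity)
      _ = 1 := by field_simp
  -- inner products with u s
  have hinner : ∀ s : ℝ, 0 ≤ s → ∀ n : ℕ,
      ⟪y n, u s⟫ = (1 / (n : ℝ)) * ∑ k ∈ Finset.Icc 1 n,
        ρ k * Real.exp (-(t k - s) ^ 2) := by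
    intro s hs n
    rw [hy, real_inner_smul_left, sum_inner]
    congr 1
    refine Finset.sum_congr rfl fun k _ => ?_
    rw [hx, real_inner_smul_left, hu (t k) (ht0 k) s hs]
  -- t tends to infinity
  have httop : Tendsto t atTop atTop := by
    have h1 : Tendsto (fun n : ℕ => δ * ∑ i ∈ Finset.range n, (1 / (i + 1) : ℝ))
        atTop atTop :=
      (tendsto_sum_range_one_div_nat_succ_atTop).const_mul_atTop hδ0
    have h2 : Tendsto (fun n : ℕ => n - 1) atTop atTop :=
      tendsto_sub_atTop_nat 1
    have h3 := h1.comp h2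
    refine h3.congr fun n => ?_
    simp only [Function.comp]
    rw [ht, Finset.sum_Ico_eq_sum_range, Finset.mul_sum]
    refine Finset.sum_congr rfl fun i _ => ?_
    rw [hd]
    push_cast
    ring
  -- inner with u s tends to zero
  have hws : ∀ s : ℝ, 0 ≤ s → Tendsto (fun n : ℕ => ⟪y n, u s⟫) atTop (nhds 0) := by
    intro s hs
    set g : ℕ → ℝ := fun k => ρ k * Real.exp (-(t k - s) ^ 2) with hg_def
    have hg : Tendsto g atTop (nhds 0) := by
      have h1 : Tendsto (fun k : ℕ => t k - s) atTop atTop := by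
        simpa [sub_eq_add_neg] using tendsto_atTop_add_const_right atTop (-s) httop
      have h2 : Tendsto (fun k : ℕ => (t k - s) ^ 2) atTop atTop := by
        refine (h1.atTop_mul_atTop₀ h1).congr fun k => ?_
        ring
      have h3 : Tendsto (fun k : ℕ => Real.exp (-(t k - s) ^ 2)) atTop (nhds 0) :=
        Real.tendsto_exp_atBot.comp (tendsto_neg_atTop_atBot.comp h2)
      refine squeeze_zero (fun k => ?_) (fun k => ?_) h3
      · exact mul_nonneg (hρ_pos k).le (Real.exp_pos _).le
      · calc ρ k * Real.exp (-(t k - s) ^ 2)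
            ≤ 1 * Real.exp (-(t k - s) ^ 2) :=
              mul_le_mul_of_nonneg_right (hρ_le_one k) (Real.exp_pos _).le
          _ = Real.exp (-(t k - s) ^ 2) := one_mul _
    have hg' : Tendsto (fun i : ℕ => g (1 + i)) atTop (nhds 0) := by
      refine (hg.comp (tendsto_add_atTop_nat 1)).congr fun i => ?_
      simp [Nat.add_comm]
    have hces := hg'.cesaro
    refine hces.congr fun n => ?_
    rw [hinner s hs n, ← Finset.Ico_add_one_right_eq_Icc, Finset.sum_Ico_eq_sum_range,
      Nat.add_sub_cancel]
    simp only [one_div, hg_def]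
  -- weak convergence
  have hweak : ∀ z : X, Tendsto (fun n : ℕ => ⟪y n, z⟫) atTop (nhds 0) := by
    set K := (Submodule.span ℝ (u '' Set.Ici (0 : ℝ))).topologicalClosure with hK
    haveI : CompleteSpace K :=
      (Submodule.isClosed_topologicalClosure _).completeSpace_coe
    have hyK : ∀ n, y n ∈ K := by
      intro n
      rw [hy]
      refine Submodule.smul_mem _ _ (Submodule.sum_mem _ fun k _ => ?_)
      rw [hx]
      exact Submodule.smul_mem _ _
        (Submodule.le_topologicalClosure _ (Submodule.subset_span ⟨t k, ht0 k, rfl⟩))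
    have hspan : ∀ v ∈ Submodule.span ℝ (u '' Set.Ici (0 : ℝ)),
        Tendsto (fun n : ℕ => ⟪y n, v⟫) atTop (nhds 0) := by
      intro v hv
      induction hv using Submodule.span_induction with
      | mem w hw =>
        obtain ⟨s, hs, rfl⟩ := hw
        exact hws s hs
      | zero => simpa using (tendsto_const_nhds : Tendsto (fun _ : ℕ => (0:ℝ)) atTop _)
      | add a b _ _ ha hb =>
        have := ha.add hb
        simp only [add_zero] at this
        refine this.congr fun n => ?_
        rw [inner_add_right]
      | smul c a _ ha =>
        have := ha.const_mul c
        simp only [mul_zero] at this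
        refine this.congr fun n => ?_
        rw [real_inner_smul_right]
    have hA : ∀ v ∈ K, Tendsto (fun n : ℕ => ⟪y n, v⟫) atTop (nhds 0) := by
      intro v hv
      have hv' : v ∈ closure ((Submodule.span ℝ (u '' Set.Ici (0 : ℝ))) : Set X) := hv
      rw [NormedAddCommGroup.tendsto_nhds_zero]
      intro ε hε
      obtain ⟨w, hw, hdist⟩ := Metric.mem_closure_iff.1 hv' (ε / 2) (by positivity)
      have hw' := (NormedAddCommGroup.tendsto_nhds_zero).1 (hspan w hw) (ε / 2)
        (by positivity)
      filter_upwards [hw'] with n hn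
      have hsplit : ⟪y n, v⟫ = ⟪y n, w⟫ + ⟪y n, v - w⟫ := by
        rw [← inner_add_right]
        congr 1
        abel
      have hb1 : |⟪y n, v - w⟫| ≤ ‖v - w‖ := by
        calc |⟪y n, v - w⟫| ≤ ‖y n‖ * ‖v - w‖ := abs_real_inner_le_norm _ _
          _ ≤ 1 * ‖v - w‖ := mul_le_mul_of_nonneg_right (hynorm n) (norm_nonneg _)
          _ = ‖v - w‖ := one_mul _
      have hb2 : ‖v - w‖ < ε / 2 := by
        rw [← dist_eq_norm]
        exact hdist
      rw [Real.norm_eq_abs] at hn ⊢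
      calc |⟪y n, v⟫| ≤ |⟪y n, w⟫| + |⟪y n, v - w⟫| := hsplit ▸ abs_add_le _ _
        _ < ε / 2 + ε / 2 := by exact add_lt_add_of_lt_of_le hn (le_of_lt (lt_of_le_of_lt hb1 hb2))
        _ = ε := by ring
    intro z
    obtain ⟨v, hv, w, hw, rfl⟩ := K.exists_add_mem_mem_orthogonal z
    have hzero : ∀ n, ⟪y n, v + w⟫ = ⟪y n, v⟫ := by
      intro n
      rw [inner_add_right, (Submodule.mem_orthogonal K w).1 hw (y n) (hyK n), add_zero]
    exact ((hA v hv).congr fun n => (hzero n).symm)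
  -- lower bound
  have hlow : ∀ n : ℕ, 1 ≤ n →
      1 / 2 * Real.exp (-(δ ^ 2 / 6 * (π ^ 2 + 3))) ≤ ‖y n‖ := by
    intro n hn
    have hn' : (0 : ℝ) < n := by exact_mod_cast hn
    set c : ℝ := Real.exp (-(δ ^ 2 * π ^ 2 / 6)) * Real.exp (-(δ ^ 2 / 2)) with hc_def
    have hcpos : 0 < c := by positivity
    have hcexp : Real.exp (-(δ ^ 2 / 6 * (π ^ 2 + 3))) = c := by
      rw [hc_def, ← Real.exp_add]
      congr 1
      ring
    have hkey : ∀ k ∈ Finset.Icc (n / 2 + 1) n,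
        c ≤ ρ k * Real.exp (-(t k - t n) ^ 2) := by
      intro k hk
      simp only [Finset.mem_Icc] at hk
      have hk1 : 1 ≤ k := by omega
      have hdiff : t n - t k = δ * ∑ j ∈ Finset.Ico k n, (1 : ℝ) / j := by
        rw [ht, ht, ← Finset.sum_Ico_consecutive _ hk1 hk.2, add_sub_cancel_left,
          Finset.mul_sum]
        exact Finset.sum_congr rfl fun j _ => by rw [hd, mul_one_div]
      have hsum := sum_inv_le_log_two hk1 (by omega : n ≤ 2 * k - 1)
      have hsum0 : 0 ≤ ∑ j ∈ Finset.Ico k n, (1 : ℝ) / j :=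
        Finset.sum_nonneg fun j _ => by positivity
      have hsq2 : (t k - t n) ^ 2 ≤ δ ^ 2 / 2 := by
        have h1 : t n - t k ≤ δ * Real.log 2 := by
          rw [hdiff]
          exact mul_le_mul_of_nonneg_left hsum hδ0.le
        have h0 : 0 ≤ t n - t k := by rw [hdiff]; positivity
        have hl2 : Real.log 2 < 0.6931471808 := Real.log_two_lt_d9
        have hl2' : 0 ≤ Real.log 2 := Real.log_nonneg one_le_two
        have heq : (t k - t n) ^ 2 = (t n - t k) ^ 2 := by ring
        have hlogsq : Real.log 2 ^ 2 ≤ 1 / 2 := by nlinarith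
        have h2 : (t n - t k) ^ 2 ≤ (δ * Real.log 2) ^ 2 := by
          exact pow_le_pow_left₀ h0 h1 2
        have h3 : (δ * Real.log 2) ^ 2 = δ ^ 2 * Real.log 2 ^ 2 := by ring
        have h4 : δ ^ 2 * Real.log 2 ^ 2 ≤ δ ^ 2 * (1 / 2) :=
          mul_le_mul_of_nonneg_left hlogsq (sq_nonneg δ)
        rw [heq]
        linarith
      calc c ≤ ρ k * Real.exp (-(δ ^ 2 / 2)) :=
            mul_le_mul_of_nonneg_right (hρ_ge k) (Real.exp_pos _).le
        _ ≤ ρ k * Real.exp (-(t k - t n) ^ 2) :=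
            mul_le_mul_of_nonneg_left (Real.exp_le_exp.2 (by linarith)) (hρ_pos k).le
    have hsub : Finset.Icc (n / 2 + 1) n ⊆ Finset.Icc 1 n :=
      Finset.Icc_subset_Icc (by omega) le_rfl
    have hcard : (Finset.Icc (n / 2 + 1) n).card = n - n / 2 := by
      rw [Nat.card_Icc]; omega
    have hS : ((n - n / 2 : ℕ) : ℝ) * c
        ≤ ∑ k ∈ Finset.Icc 1 n, ρ k * Real.exp (-(t k - t n) ^ 2) := by
      calc ((n - n / 2 : ℕ) : ℝ) * c = (Finset.Icc (n / 2 + 1) n).card • c := by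
            rw [hcard, nsmul_eq_mul]
        _ ≤ ∑ k ∈ Finset.Icc (n / 2 + 1) n, ρ k * Real.exp (-(t k - t n) ^ 2) :=
            Finset.card_nsmul_le_sum _ _ _ hkey
        _ ≤ ∑ k ∈ Finset.Icc 1 n, ρ k * Real.exp (-(t k - t n) ^ 2) :=
            Finset.sum_le_sum_of_subset_of_nonneg hsub fun k _ _ =>
              mul_nonneg (hρ_pos k).le (Real.exp_pos _).le
    have hhalf : (n : ℝ) / 2 ≤ ((n - n / 2 : ℕ) : ℝ) := by
      have h2 : ((n / 2 : ℕ) : ℝ) ≤ (n : ℝ) / 2 := Nat.cast_div_le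
      rw [Nat.cast_sub (Nat.div_le_self n 2)]
      linarith
    have hstep1 : 1 / 2 * c ≤ (1 / (n : ℝ)) * (((n - n / 2 : ℕ) : ℝ) * c) := by
      have h3 : 1 / 2 ≤ (1 / (n : ℝ)) * ((n - n / 2 : ℕ) : ℝ) := by
        have := mul_le_mul_of_nonneg_left hhalf (le_of_lt (by positivity : (0:ℝ) < 1 / n))
        calc (1 : ℝ) / 2 = 1 / (n : ℝ) * ((n : ℝ) / 2) := by field_simp
          _ ≤ _ := this
      calc 1 / 2 * c ≤ ((1 / (n : ℝ)) * ((n - n / 2 : ℕ) : ℝ)) * c :=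
            mul_le_mul_of_nonneg_right h3 hcpos.le
        _ = (1 / (n : ℝ)) * (((n - n / 2 : ℕ) : ℝ) * c) := by ring
    have hstep2 : (1 / (n : ℝ)) * (((n - n / 2 : ℕ) : ℝ) * c) ≤ ⟪y n, u (t n)⟫ := by
      rw [hinner (t n) (ht0 n) n]
      exact mul_le_mul_of_nonneg_left hS (by positivity)
    have hstep3 : ⟪y n, u (t n)⟫ ≤ ‖y n‖ := by
      calc ⟪y n, u (t n)⟫ ≤ ‖y n‖ * ‖u (t n)‖ := real_inner_le_norm _ _
        _ = ‖y n‖ := by rw [hnormu (t n) (ht0 n), mul_one]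
    rw [hcexp]
    linarith
  refine ⟨?_, Real.exp_pos _, hweak, hlow, by positivity⟩
  have h1 := ((hasSum_nat_add_iff' 1).2 hsq).tsum_eq
  rw [h1]
  congr 1
  rw [Finset.sum_range_one, hd]
  push_cast
  ring
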